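/- Let A, B, M₁, M₂ be n × n complex matrices, let Γ be the circle of radius r > 0 centered at c ∈ ℂ, and set ΔM = M₂ − M₁. Assume Bz − A − M₁ is invertible for every z ∈ Γ with R₁ = sup_{z ∈ Γ} ‖(Bz − A − M₁)⁻¹‖ < ∞, and assume ‖ΔM‖ · R₁ < 1. Then Bz − A − M₂ is invertible for every z ∈ Γ, the Riesz projections P_i = (1/(2πi)) ∮_Γ (Bz − A − M_i)⁻¹ B dz are well defined, and ‖P₁ − P₂‖ ≤ r · R₁² · ‖ΔM‖ · ‖B‖ / (1 − R₁ ‖ΔM‖). In particular the map from the perturbation matrix to the Riesz projection is Lipschitz continuous with a constant proportional to r R₁² ‖B‖ when R₁‖ΔM‖ is bounded away from 1. -/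

import Mathlib

open Matrix MeasureTheory

attribute [local instance] Matrix.normedAddCommGroup Matrix.normedSpace

/-- The spectral (operator) norm of a complex matrix, induced by the Euclidean
vector norm. -/
noncomputable def specNorm {m n : Type*} [Fintype m] [Fintype n] [DecidableEq n]
    (A : Matrix m n ℂ) : ℝ :=
  ‖LinearMap.toContinuousLinearMap (Matrix.toEuclideanLin A)‖

/-- The Riesz projection `(1/(2πi)) ∮_Γ (Bz − A − M)⁻¹ B dz` over the circle `Γ` of
radius `r` centered at `c`, parametrized as `z = c + r e^{iθ}`, `θ ∈ [0, 2π]`. -/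
noncomputable def rieszProj (n : ℕ) (A B M : Matrix (Fin n) (Fin n) ℂ) (c : ℂ) (r : ℝ) :
    Matrix (Fin n) (Fin n) ℂ :=
  (2 * Real.pi * Complex.I)⁻¹ •
    ∫ θ in (0:ℝ)..(2 * Real.pi),
      (Complex.I * (r : ℂ) * Complex.exp (θ * Complex.I)) •
        (((c + (r : ℂ) * Complex.exp (θ * Complex.I)) • B - A - M)⁻¹ * B)

namespace SpecAux
variable {n : ℕ}

noncomputable def ψ (n : ℕ) :
    Matrix (Fin n) (Fin n) ℂ ≃ₗ[ℂ] (EuclideanSpace ℂ (Fin n) →L[ℂ] EuclideanSpace ℂ (Fin n)) :=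
  Matrix.toEuclideanLin.trans LinearMap.toContinuousLinearMap

lemma spec_def (A : Matrix (Fin n) (Fin n) ℂ) : specNorm A = ‖ψ n A‖ := rfl

lemma spec_def' (A : Matrix (Fin n) (Fin n) ℂ) :
    specNorm A = ‖toEuclideanCLM (𝕜 := ℂ) A‖ := rfl

lemma spec_nonneg (A : Matrix (Fin n) (Fin n) ℂ) : 0 ≤ specNorm A := norm_nonneg _

lemma spec_mul_le (A B : Matrix (Fin n) (Fin n) ℂ) :
    specNorm (A * B) ≤ specNorm A * specNorm B := by
  simp only [spec_def', _root_.map_mul]; exact norm_mul_le _ _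

lemma spec_smul (a : ℂ) (A : Matrix (Fin n) (Fin n) ℂ) :
    specNorm (a • A) = ‖a‖ * specNorm A := by
  simp only [spec_def]; rw [_root_.map_smul]; exact norm_smul a ((ψ n) A)

lemma spec_neg (A : Matrix (Fin n) (Fin n) ℂ) : specNorm (-A) = specNorm A := by
  simp only [spec_def, map_neg, norm_neg]

lemma spec_add_le (A B : Matrix (Fin n) (Fin n) ℂ) :
    specNorm (A + B) ≤ specNorm A + specNorm B := by
  simp only [spec_def, map_add]; exact norm_add_le _ _

lemma spec_continuous : Continuous (specNorm (m := Fin n) (n := Fin n)) := by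
  simp only [funext (spec_def (n := n))]
  exact ((ψ n).toLinearMap.continuous_of_finiteDimensional).norm

lemma isUnit_one_sub (T : Matrix (Fin n) (Fin n) ℂ) (h : specNorm T < 1) :
    IsUnit (1 - T) := by
  have h' : ‖toEuclideanCLM (𝕜 := ℂ) T‖ < 1 := by rwa [← spec_def']
  have h2 : IsUnit (toEuclideanCLM (𝕜 := ℂ) (n := Fin n) (1 - T)) := by
    rw [map_sub, _root_.map_one]
    exact (Units.oneSub _ h').isUnit
  have h3 := h2.map (toEuclideanCLM (𝕜 := ℂ) (n := Fin n)).symm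
  simpa using h3

lemma cont_inv {α : Type*} [TopologicalSpace α] {X : α → Matrix (Fin n) (Fin n) ℂ}
    (hX : Continuous X) (h : ∀ t, IsUnit (X t)) : Continuous fun t => (X t)⁻¹ := by
  simp only [Matrix.inv_def, Ring.inverse_eq_inv]
  exact ((hX.matrix_det).inv₀ fun t =>
    ((Matrix.isUnit_iff_isUnit_det _).mp (h t)).ne_zero).smul hX.matrix_adjugate

lemma inv_sub_inv' (X Y : Matrix (Fin n) (Fin n) ℂ) (hX : IsUnit X) (hY : IsUnit Y) :
    X⁻¹ - Y⁻¹ = X⁻¹ * (Y - X) * Y⁻¹ := by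
  have hXd := (Matrix.isUnit_iff_isUnit_det X).mp hX
  have hYd := (Matrix.isUnit_iff_isUnit_det Y).mp hY
  have h : X⁻¹ * (Y - X) * Y⁻¹ = X⁻¹ * (Y * Y⁻¹) - (X⁻¹ * X) * Y⁻¹ := by noncomm_ring
  rw [h, Matrix.mul_nonsing_inv _ hYd, Matrix.nonsing_inv_mul _ hXd, mul_one, one_mul]

end SpecAux


open SpecAux in
/-- **Lipschitz stability of Riesz projections under a Neumann smallness condition.**
Let `A, B, M₁, M₂` be `n × n` complex matrices, `Γ` the circle of radius `r > 0` centered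
at `c`, and `ΔM = M₂ − M₁`. Assume `Bz − A − M₁` is invertible for all `z ∈ Γ`, let
`R₁ = sup_{z ∈ Γ} ‖(Bz − A − M₁)⁻¹‖` (spectral norm), and assume `‖ΔM‖ · R₁ < 1`.
Then `Bz − A − M₂` is invertible for every `z ∈ Γ` (so both Riesz projections
`Pᵢ = (1/(2πi)) ∮_Γ (Bz − A − Mᵢ)⁻¹ B dz` are well defined), and
`‖P₁ − P₂‖ ≤ r · R₁² · ‖ΔM‖ · ‖B‖ / (1 − R₁ ‖ΔM‖)`. -/
theorem riesz_projection_lipschitz (n : ℕ)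
    (A B M₁ M₂ : Matrix (Fin n) (Fin n) ℂ) (c : ℂ) (r : ℝ) (hr : 0 < r)
    (h₁ : ∀ z ∈ Metric.sphere c r, IsUnit (z • B - A - M₁))
    (R₁ : ℝ)
    (hR₁ : R₁ = sSup ((fun z => specNorm ((z • B - A - M₁)⁻¹)) '' Metric.sphere c r))
    (hsmall : specNorm (M₂ - M₁) * R₁ < 1) :
    (∀ z ∈ Metric.sphere c r, IsUnit (z • B - A - M₂)) ∧
      specNorm (rieszProj n A B M₁ c r - rieszProj n A B M₂ c r) ≤
        r * R₁ ^ 2 * specNorm (M₂ - M₁) * specNorm B / (1 - R₁ * specNorm (M₂ - M₁)) := by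
  set D := M₂ - M₁ with hDdef
  set d := specNorm D with hddef
  have hsub : ∀ z : ℂ, z • B - A - M₂ = (z • B - A - M₁) - D := by
    intro z; rw [hDdef]; abel
  -- continuity of the base family
  have hF : Continuous fun z : ℂ => z • B - A - M₁ :=
    ((continuous_id.smul continuous_const).sub continuous_const).sub continuous_const
  have hdetne : ∀ z ∈ Metric.sphere c r, (z • B - A - M₁).det ≠ 0 := fun z hz =>
    ((Matrix.isUnit_iff_isUnit_det _).mp (h₁ z hz)).ne_zero
  have hinvOn : ContinuousOn (fun z : ℂ => (z • B - A - M₁)⁻¹) (Metric.sphere c r) := by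
    simp only [Matrix.inv_def, Ring.inverse_eq_inv]
    exact ((hF.matrix_det.continuousOn.inv₀ hdetne).smul hF.matrix_adjugate.continuousOn)
  have bdd : BddAbove ((fun z => specNorm ((z • B - A - M₁)⁻¹)) '' Metric.sphere c r) :=
    ((isCompact_sphere c r).image_of_continuousOn
      (spec_continuous.comp_continuousOn hinvOn)).bddAbove
  have hle : ∀ z ∈ Metric.sphere c r, specNorm ((z • B - A - M₁)⁻¹) ≤ R₁ := fun z hz =>
    hR₁ ▸ le_csSup bdd ⟨z, hz, rfl⟩
  obtain ⟨z₀, hz₀⟩ : (Metric.sphere c r).Nonempty :=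
    NormedSpace.sphere_nonempty.mpr hr.le
  have hR₁0 : 0 ≤ R₁ := (spec_nonneg _).trans (hle z₀ hz₀)
  have hd0 : 0 ≤ d := spec_nonneg _
  have hRd : R₁ * d < 1 := by rw [mul_comm]; exact hsmall
  have hpos : 0 < 1 - R₁ * d := by linarith
  -- Part 1: invertibility
  have hUnit : ∀ z ∈ Metric.sphere c r, IsUnit (z • B - A - M₂) := by
    intro z hz
    have hdet₁ := (Matrix.isUnit_iff_isUnit_det _).mp (h₁ z hz)
    have hT : specNorm ((z • B - A - M₁)⁻¹ * D) ≤ R₁ * d :=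
      (spec_mul_le _ _).trans (mul_le_mul_of_nonneg_right (hle z hz) hd0)
    have hu2 : IsUnit (1 - (z • B - A - M₁)⁻¹ * D) :=
      isUnit_one_sub _ (lt_of_le_of_lt hT hRd)
    have hfac : z • B - A - M₂ = (z • B - A - M₁) * (1 - (z • B - A - M₁)⁻¹ * D) := by
      rw [mul_sub, mul_one, ← mul_assoc, Matrix.mul_nonsing_inv _ hdet₁, one_mul, hsub]
    rw [hfac]
    exact (h₁ z hz).mul hu2
  refine ⟨hUnit, ?_⟩
  -- bound on the perturbed resolvent
  have h2le : ∀ z ∈ Metric.sphere c r,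
      specNorm ((z • B - A - M₂)⁻¹) ≤ R₁ / (1 - R₁ * d) := by
    intro z hz
    have hid : (z • B - A - M₂)⁻¹ - (z • B - A - M₁)⁻¹ =
        (z • B - A - M₂)⁻¹ * D * (z • B - A - M₁)⁻¹ := by
      have := inv_sub_inv' _ _ (hUnit z hz) (h₁ z hz)
      rwa [show (z • B - A - M₁) - (z • B - A - M₂) = D by rw [hsub]; abel] at this
    have heq : (z • B - A - M₂)⁻¹ =
        (z • B - A - M₁)⁻¹ + (z • B - A - M₂)⁻¹ * D * (z • B - A - M₁)⁻¹ := by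
      rw [← hid]; abel
    set s₂ := specNorm ((z • B - A - M₂)⁻¹) with hs₂
    have hb : s₂ ≤ R₁ + s₂ * d * R₁ := by
      calc s₂ = specNorm ((z • B - A - M₁)⁻¹ +
          (z • B - A - M₂)⁻¹ * D * (z • B - A - M₁)⁻¹) := by rw [← heq]
        _ ≤ specNorm ((z • B - A - M₁)⁻¹) +
            specNorm ((z • B - A - M₂)⁻¹ * D * (z • B - A - M₁)⁻¹) := spec_add_le _ _
        _ ≤ R₁ + s₂ * d * R₁ := by
            refine add_le_add (hle z hz) ?_
            refine (spec_mul_le _ _).trans ?_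
            refine mul_le_mul ((spec_mul_le _ _).trans ?_) (hle z hz) (spec_nonneg _) ?_
            · exact le_rfl
            · exact mul_nonneg (spec_nonneg _) hd0
    rw [le_div_iff₀ hpos]
    nlinarith [spec_nonneg ((z • B - A - M₂)⁻¹)]
  -- bound on the resolvent difference
  have hdiff : ∀ z ∈ Metric.sphere c r,
      specNorm ((z • B - A - M₁)⁻¹ - (z • B - A - M₂)⁻¹) ≤
        R₁ * d * (R₁ / (1 - R₁ * d)) := by
    intro z hz
    have hid := inv_sub_inv' _ _ (h₁ z hz) (hUnit z hz)
    rw [show (z • B - A - M₂) - (z • B - A - M₁) = -D by rw [hsub]; abel] at hid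
    rw [show (z • B - A - M₁)⁻¹ * (-D) * (z • B - A - M₂)⁻¹ =
        -((z • B - A - M₁)⁻¹ * D * (z • B - A - M₂)⁻¹) by noncomm_ring] at hid
    rw [hid, spec_neg]
    refine (spec_mul_le _ _).trans ?_
    refine mul_le_mul ((spec_mul_le _ _).trans ?_) (h2le z hz) (spec_nonneg _) ?_
    · exact mul_le_mul_of_nonneg_right (hle z hz) hd0
    · positivity
  -- the circle path
  set zc : ℝ → ℂ := fun θ => c + (r : ℂ) * Complex.exp (θ * Complex.I) with hzc
  have hzmem : ∀ θ : ℝ, zc θ ∈ Metric.sphere c r := by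
    intro θ
    simp only [hzc, Metric.mem_sphere, Complex.dist_eq, add_sub_cancel_left]
    rw [norm_mul, Complex.norm_real, Real.norm_eq_abs, Complex.norm_exp_ofReal_mul_I, mul_one,
      abs_of_pos hr]
  have hzcont : Continuous zc := by
    exact continuous_const.add (continuous_const.mul
      ((Complex.continuous_ofReal.mul continuous_const).cexp))
  -- continuity and integrability of the integrands
  have hcontX : ∀ (M : Matrix (Fin n) (Fin n) ℂ),
      Continuous fun θ : ℝ => zc θ • B - A - M := fun M =>
    ((hzcont.smul continuous_const).sub continuous_const).sub continuous_const
  have hcont1 : Continuous fun θ : ℝ =>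
      (Complex.I * (r : ℂ) * Complex.exp (θ * Complex.I)) •
        ((zc θ • B - A - M₁)⁻¹ * B) := by
    refine Continuous.fun_smul ?_ ?_
    · exact continuous_const.mul ((Complex.continuous_ofReal.mul continuous_const).cexp)
    · exact (cont_inv (hcontX M₁) fun θ => h₁ _ (hzmem θ)).matrix_mul continuous_const
  have hcont2 : Continuous fun θ : ℝ =>
      (Complex.I * (r : ℂ) * Complex.exp (θ * Complex.I)) •
        ((zc θ • B - A - M₂)⁻¹ * B) := by
    refine Continuous.fun_smul ?_ ?_
    · exact continuous_const.mul ((Complex.continuous_ofReal.mul continuous_const).cexp)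
    · exact (cont_inv (hcontX M₂) fun θ => hUnit _ (hzmem θ)).matrix_mul continuous_const
  have hInt1 := hcont1.intervalIntegrable (μ := volume) (0 : ℝ) (2 * Real.pi)
  have hInt2 := hcont2.intervalIntegrable (μ := volume) (0 : ℝ) (2 * Real.pi)
  -- rewrite the projection difference as a single integral
  have hPdiff : rieszProj n A B M₁ c r - rieszProj n A B M₂ c r =
      (2 * Real.pi * Complex.I)⁻¹ •
        ∫ θ in (0:ℝ)..(2 * Real.pi),
          ((Complex.I * (r : ℂ) * Complex.exp (θ * Complex.I)) •
            ((zc θ • B - A - M₁)⁻¹ * B) -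
          (Complex.I * (r : ℂ) * Complex.exp (θ * Complex.I)) •
            ((zc θ • B - A - M₂)⁻¹ * B)) := by
    rw [rieszProj, rieszProj, ← smul_sub, intervalIntegral.integral_sub hInt1 hInt2]
  have hgInt := hInt1.sub hInt2
  -- transport through ψ as a continuous linear map
  set ψL : Matrix (Fin n) (Fin n) ℂ →L[ℂ]
      (EuclideanSpace ℂ (Fin n) →L[ℂ] EuclideanSpace ℂ (Fin n)) :=
    LinearMap.toContinuousLinearMap (ψ n).toLinearMap with hψL
  have hψeq : ∀ X : Matrix (Fin n) (Fin n) ℂ, specNorm X = ‖ψL X‖ := fun X => rfl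
  set C : ℝ := r * (R₁ * d * (R₁ / (1 - R₁ * d)) * specNorm B) with hC
  have hCbound : ∀ θ ∈ Set.uIoc (0:ℝ) (2 * Real.pi),
      ‖ψL ((Complex.I * (r : ℂ) * Complex.exp (θ * Complex.I)) •
            ((zc θ • B - A - M₁)⁻¹ * B) -
          (Complex.I * (r : ℂ) * Complex.exp (θ * Complex.I)) •
            ((zc θ • B - A - M₂)⁻¹ * B))‖ ≤ C := by
    intro θ _
    rw [← hψeq, ← smul_sub, ← Matrix.sub_mul, spec_smul]
    have habs : ‖Complex.I * (r : ℂ) * Complex.exp (θ * Complex.I)‖ = r := by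
      simp only [norm_mul, Complex.norm_I, Complex.norm_real, Real.norm_eq_abs,
        Complex.norm_exp_ofReal_mul_I, one_mul, mul_one, abs_of_pos hr]
    rw [habs, hC]
    refine mul_le_mul_of_nonneg_left ((spec_mul_le _ _).trans ?_) hr.le
    exact mul_le_mul_of_nonneg_right (hdiff _ (hzmem θ)) (spec_nonneg _)
  have hnorm : specNorm (rieszProj n A B M₁ c r - rieszProj n A B M₂ c r) ≤
      (2 * Real.pi)⁻¹ * (C * (2 * Real.pi)) := by
    rw [hPdiff, hψeq, _root_.map_smul,
      norm_smul (α := ℂ)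
        (β := EuclideanSpace ℂ (Fin n) →L[ℂ] EuclideanSpace ℂ (Fin n))]
    have hns : ‖(2 * (Real.pi : ℂ) * Complex.I)⁻¹‖ = (2 * Real.pi)⁻¹ := by
      simp only [norm_inv, norm_mul, Complex.norm_I, Complex.norm_two,
        Complex.norm_real, Real.norm_eq_abs, mul_one, abs_of_pos Real.pi_pos]
    rw [hns]
    refine mul_le_mul_of_nonneg_left ?_ (by positivity)
    refine (le_of_eq (congrArg norm
      (ContinuousLinearMap.intervalIntegral_comp_comm ψL hgInt).symm)).trans ?_
    have h := intervalIntegral.norm_integral_le_of_norm_le_const hCbound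
    rwa [sub_zero, abs_of_pos Real.two_pi_pos] at h
  refine hnorm.trans ?_
  have h2π : (0:ℝ) < 2 * Real.pi := Real.two_pi_pos
  rw [hC]
  rw [div_eq_mul_inv, div_eq_mul_inv]
  have : (2 * Real.pi)⁻¹ * (r * (R₁ * d * (R₁ * (1 - R₁ * d)⁻¹) * specNorm B) * (2 * Real.pi))
      = r * R₁ ^ 2 * d * specNorm B * (1 - R₁ * d)⁻¹ := by
    field_simp
  rw [this]
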